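/- Let f : ℝⁿ → ℝ be differentiable, λ > 0, and x ∈ ℝⁿ. Define Ĵ₊ = {i : x_i > 0 and g(x)_i > 0} and Ĵ₋ = {i : x_i < 0 and g(x)_i < 0}. Then for every t > 0 satisfying t ≥ g(x)_i / x_i for every i ∈ Ĵ₊ ∪ Ĵ₋ (in particular for every t > 0 when Ĵ₊ ∪ Ĵ₋ is empty), one has G_t(x) = g(x). -/

import Mathlib

open scoped RealInnerProductSpace

noncomputable section

/-- `ℝⁿ` with the Euclidean norm. -/
abbrev E (n : ℕ) := EuclideanSpace ℝ (Fin n)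

/-- The vector `g(x)` measuring first-order stationarity of `f + lam‖·‖₁`. -/
def gvec (n : ℕ) (f : E n → ℝ) (lam : ℝ) (x : E n) : E n := WithLp.toLp 2 fun i =>
  if 0 < x i then gradient f x i + lam
  else if x i < 0 then gradient f x i - lam
  else gradient f x i - min (max (-lam) (gradient f x i)) lam

/-- The proximal-gradient residual `G_t(x) = t (x - prox_{(lam/t)‖·‖₁}(x - ∇f(x)/t))`. -/
def Gres (n : ℕ) (f : E n → ℝ) (lam t : ℝ) (x : E n) : E n := WithLp.toLp 2 fun i =>
  if (gradient f x i + lam) / t < x i then gradient f x i + lam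
  else if x i < (gradient f x i - lam) / t then gradient f x i - lam
  else t * x i

/-- The proximal-gradient update `P_t(x) = prox_{(lam/t)‖·‖₁}(x - ∇f(x)/t)` (soft-thresholding). -/
def Pt (n : ℕ) (f : E n → ℝ) (lam t : ℝ) (x : E n) : E n := WithLp.toLp 2 fun i =>
  if lam / t < x i - gradient f x i / t then x i - gradient f x i / t - lam / t
  else if x i - gradient f x i / t < -(lam / t) then x i - gradient f x i / t + lam / t
  else 0

/-- The objective `φ(x) = f(x) + lam ‖x‖₁`. -/
def phi (n : ℕ) (f : E n → ℝ) (lam : ℝ) (x : E n) : ℝ := f x + lam * ∑ i, |x i|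

/-- The Hessian of `f` at `x`, as a continuous linear map. -/
def hess (n : ℕ) (f : E n → ℝ) (x : E n) : E n →L[ℝ] E n := fderiv ℝ (gradient f) x

/-- The scaling map `S_{x,ε}`: identity on coordinates with `|x_i| > √ε`, multiplication by
`x_i` on the others. -/
def Smap (n : ℕ) (x : E n) (eps : ℝ) (u : E n) : E n := WithLp.toLp 2 fun i =>
  if Real.sqrt eps < |x i| then u i else x i * u i

/-- The relaxed first-order residual vector `g^ε(x)`. -/
def gveps (n : ℕ) (f : E n → ℝ) (lam eps : ℝ) (x : E n) : E n := WithLp.toLp 2 fun i =>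
  if Real.sqrt eps < x i then gradient f x i + lam
  else if x i < -Real.sqrt eps then gradient f x i - lam
  else gradient f x i -
    min (max (-(lam + eps ^ ((3:ℝ)/4))) (gradient f x i)) (lam + eps ^ ((3:ℝ)/4))

/-- For all `t > 0` at least as large as `g(x)_i / x_i` on the index sets
`Ĵ₊ = {i : x_i > 0, g(x)_i > 0}` and `Ĵ₋ = {i : x_i < 0, g(x)_i < 0}`, one has
`G_t(x) = g(x)`. -/
theorem stmt4 {n : ℕ} (f : E n → ℝ) (hf : Differentiable ℝ f) (lam : ℝ) (hlam : 0 < lam)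
    (x : E n) (t : ℝ) (ht : 0 < t)
    (hlarge : ∀ i, (0 < x i ∧ 0 < gvec n f lam x i) ∨ (x i < 0 ∧ gvec n f lam x i < 0) →
      gvec n f lam x i / x i ≤ t) :
    Gres n f lam t x = gvec n f lam x := by
  ext i
  specialize hlarge i
  simp only [Gres, gvec, PiLp.toLp_apply] at hlarge ⊢
  set gi := gradient f x i with hgi
  rcases lt_trichotomy (x i) 0 with hx | hx | hx
  · -- x i < 0
    simp only [if_neg (lt_asymm hx), if_pos hx] at hlarge ⊢
    have key : t * x i ≤ gi - lam := by
      by_cases hg : gi - lam < 0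
      · have h := hlarge (Or.inr ⟨hx, hg⟩)
        rw [div_le_iff_of_neg hx] at h
        linarith
      · nlinarith
    split_ifs with h1 h2
    · rw [div_lt_iff₀ ht] at h1
      nlinarith
    · rfl
    · push_neg at h2
      rw [div_le_iff₀ ht] at h2
      linarith
  · -- x i = 0
    simp only [hx, lt_irrefl, if_false] at hlarge ⊢
    split_ifs with h1 h2
    · rw [div_lt_iff₀ ht] at h1
      have hg : gi < -lam := by nlinarith
      rw [max_eq_left hg.le, min_eq_left (by linarith)]
      ring
    · rw [lt_div_iff₀ ht] at h2
      have hg : lam < gi := by nlinarith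
      rw [max_eq_right (by linarith), min_eq_right hg.le]
    · push_neg at h1 h2
      rw [le_div_iff₀ ht] at h1
      rw [div_le_iff₀ ht] at h2
      have hg1 : -lam ≤ gi := by nlinarith
      have hg2 : gi ≤ lam := by nlinarith
      rw [max_eq_right hg1, min_eq_left hg2]
      ring
  · -- 0 < x i
    simp only [if_pos hx] at hlarge ⊢
    have key : gi + lam ≤ t * x i := by
      by_cases hg : 0 < gi + lam
      · have h := hlarge (Or.inl ⟨hx, hg⟩)
        rw [div_le_iff₀ hx] at h
        linarith
      · nlinarith
    split_ifs with h1 h2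
    · rfl
    · rw [lt_div_iff₀ ht] at h2
      nlinarith
    · push_neg at h1
      rw [le_div_iff₀ ht] at h1
      linarith
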